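/- Fix a1,...,a_{n-1} ∈ ℕ and let ℓ = lcm(a1,...,a_{n-1}). Let I ⊆ [0,2π] be an interval of length π/(2ℓ) on which all cos(ai x), 1 ≤ i ≤ n−1, have the same strict sign. Then for any an ∈ ℕ, (1/|I|)·|{x ∈ I : all cos(ai x), 1 ≤ i ≤ n, have the same strict sign}| ≥ 1/2 − 2ℓ/an. -/

import Mathlib

open MeasureTheory Real Set

/-- The cosine sign correlation: the normalized measure of the set of `x ∈ [0, 2π]`
where all `cos (aᵢ x)` are positive or all are negative. -/
noncomputable def cosP (n : ℕ) (a : Fin n → ℕ) : ℝ :=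
  (volume {x : ℝ | x ∈ Icc 0 (2 * π) ∧
    ((∀ i, 0 < Real.cos (a i * x)) ∨ (∀ i, Real.cos (a i * x) < 0))}).toReal / (2 * π)
lemma key (c : ℝ) (hc : 0 < c) (φ u v : ℝ) (huv : u ≤ v) :
    (v - u) / 2 - π / c ≤
      (volume {x : ℝ | x ∈ Ioo u v ∧ 0 < Real.cos (c * x + φ)}).toReal := by
  have hcne : c ≠ 0 := hc.ne'
  set S : Set ℝ := {x : ℝ | 0 < Real.cos (c * x + φ)} with hSdef
  have hS : MeasurableSet S := by
    have : Continuous fun x : ℝ => Real.cos (c * x + φ) := by continuity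
    exact measurableSet_lt measurable_const this.measurable
  set f : ℝ → ℝ := S.indicator (fun _ => (1 : ℝ)) with hfdef
  have h_int : ∀ t₁ t₂ : ℝ, IntervalIntegrable f volume t₁ t₂ := by
    intro t₁ t₂
    rw [intervalIntegrable_iff]
    exact (integrableOn_const measure_Ioc_lt_top.ne).indicator hS
  have hf_nonneg : ∀ x, 0 ≤ f x := fun x => Set.indicator_nonneg (fun _ _ => zero_le_one) x
  have hmeas : ∀ p q : ℝ, p ≤ q →
      ∫ x in p..q, f x = (volume {x : ℝ | x ∈ Ioo p q ∧ 0 < Real.cos (c * x + φ)}).toReal := by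
    intro p q hpq
    rw [intervalIntegral.integral_of_le hpq, hfdef, setIntegral_indicator hS]
    rw [setIntegral_const, smul_eq_mul, mul_one]
    rw [measureReal_def]; congr 1
    have h1 : (Ioo p q : Set ℝ) =ᵐ[volume] Ioc p q := Ioo_ae_eq_Ioc
    have h2 : {x : ℝ | x ∈ Ioo p q ∧ 0 < Real.cos (c * x + φ)} = Ioo p q ∩ S := rfl
    rw [h2]
    exact measure_congr (h1.symm.inter (ae_eq_refl S))
  set T : ℝ := 2 * π / c with hTdef
  have hT : 0 < T := by positivity
  have hper : Function.Periodic f T := by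
    intro x
    have hmem : x + T ∈ S ↔ x ∈ S := by
      have : c * (x + T) + φ = c * x + φ + 2 * π := by
        rw [hTdef]; field_simp; ring
      simp only [hSdef, Set.mem_setOf_eq, this, Real.cos_add_two_pi]
    simp [hfdef, Set.indicator_apply, hmem]
  -- one period
  set a : ℝ := (-(π / 2) - φ) / c with hadef
  have haφ : c * a + φ = -(π / 2) := by rw [hadef]; field_simp; ring
  have hone : ∫ x in a..a + T, f x = π / c := by
    have hle : a ≤ a + T := by linarith
    rw [hmeas a (a + T) hle]
    have hset : {x : ℝ | x ∈ Ioo a (a + T) ∧ 0 < Real.cos (c * x + φ)} = Ioo a (a + π / c) := by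
      ext x
      simp only [Set.mem_setOf_eq, Set.mem_Ioo]
      constructor
      · rintro ⟨⟨hx1, hx2⟩, hxS⟩
        refine ⟨hx1, ?_⟩
        by_contra hcon
        push_neg at hcon
        have h1 : π / 2 ≤ c * x + φ := by
          have := (mul_le_mul_iff_right₀ hc).2 hcon
          have hca : c * (a + π / c) = c * a + π := by field_simp
          nlinarith
        have h2 : c * x + φ ≤ π + π / 2 := by
          have := (mul_lt_mul_iff_right₀ hc).2 hx2
          have hca : c * (a + T) = c * a + 2 * π := by rw [hTdef, mul_add, mul_div_cancel₀ (2 * π) hcne]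
          nlinarith
        have := Real.cos_nonpos_of_pi_div_two_le_of_le h1 h2
        linarith
      · rintro ⟨hx1, hx2⟩
        have hπc : π / c < T := by
          rw [hTdef, div_lt_div_iff₀ hc hc]
          nlinarith [Real.pi_pos]
        refine ⟨⟨hx1, by linarith⟩, ?_⟩
        apply Real.cos_pos_of_mem_Ioo
        constructor
        · have := (mul_lt_mul_iff_right₀ hc).2 hx1
          linarith
        · have := (mul_lt_mul_iff_right₀ hc).2 hx2
          have hca : c * (a + π / c) = c * a + π := by field_simp
          linarith
    rw [hset, Real.volume_Ioo]
    have he : a + π / c - a = π / c := by ring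
    rw [he, ENNReal.toReal_ofReal (by positivity)]
  -- number of full periods
  set n : ℕ := ⌊(v - u) / T⌋₊ with hndef
  have hn1 : (n : ℝ) * T ≤ v - u := by
    rw [← le_div_iff₀ hT]
    exact Nat.floor_le (div_nonneg (by linarith) hT.le)
  have hn2 : (v - u) / T < (n : ℝ) + 1 := Nat.lt_floor_add_one _
  have hsplit : (∫ x in u..u + (n : ℝ) * T, f x) + (∫ x in u + (n : ℝ) * T..v, f x)
      = ∫ x in u..v, f x :=
    intervalIntegral.integral_add_adjacent_intervals (h_int _ _) (h_int _ _)
  have htail : 0 ≤ ∫ x in u + (n : ℝ) * T..v, f x :=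
    intervalIntegral.integral_nonneg (by linarith) (fun x _ => hf_nonneg x)
  have hmain : (∫ x in u..u + (n : ℝ) * T, f x) = n * (π / c) := by
    have h1 : u + (n : ℝ) * T = u + (n : ℤ) • T := by rw [zsmul_eq_mul]; push_cast; ring
    rw [h1, hper.intervalIntegral_add_zsmul_eq (n : ℤ) u h_int,
      hper.intervalIntegral_add_eq u a, hone, zsmul_eq_mul]
    push_cast; ring
  have hvol := hmeas u v huv
  have hπc : π / c = T / 2 := by rw [hTdef]; ring
  have : (n : ℝ) * (π / c) ≥ (v - u) / 2 - π / c := by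
    rw [hπc]
    have h3 : (v - u) - T < (n : ℝ) * T := by
      have := (mul_lt_mul_of_pos_right hn2 hT)
      rw [div_mul_cancel₀ _ hT.ne'] at this
      linarith
    nlinarith
  rw [← hvol, ← hsplit, hmain]
  linarith

theorem stmt_10 (n : ℕ) (a : Fin n → ℕ) (hpos : ∀ i, 0 < a i)
    (ℓ : ℕ) (hℓ : ℓ = Finset.univ.lcm a) (t : ℝ)
    (hI : Icc t (t + π / (2 * (ℓ : ℝ))) ⊆ Icc 0 (2 * π))
    (hsign : ∀ x ∈ Ioo t (t + π / (2 * (ℓ : ℝ))),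
      (∀ i, 0 < Real.cos (a i * x)) ∨ (∀ i, Real.cos (a i * x) < 0))
    (b : ℕ) (hb : 0 < b) :
    (volume {x : ℝ | x ∈ Ioo t (t + π / (2 * (ℓ : ℝ))) ∧
        (((∀ i, 0 < Real.cos (a i * x)) ∧ 0 < Real.cos (b * x)) ∨
          ((∀ i, Real.cos (a i * x) < 0) ∧ Real.cos (b * x) < 0))}).toReal /
        (π / (2 * (ℓ : ℝ))) ≥
      1 / 2 - 2 * (ℓ : ℝ) / b := by
  have hπ := Real.pi_pos
  have hℓ0 : 0 < ℓ := by
    rcases Nat.eq_zero_or_pos ℓ with h | h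
    · exfalso
      rw [h] at hℓ
      have := (Finset.lcm_eq_zero_iff).1 hℓ.symm
      obtain ⟨i, -, hi⟩ := this
      exact (hpos i).ne' hi
    · exact h
  have hℓR : (0:ℝ) < (ℓ : ℝ) := by exact_mod_cast hℓ0
  have hbR : (0:ℝ) < (b : ℝ) := by exact_mod_cast hb
  set L : ℝ := π / (2 * (ℓ : ℝ)) with hLdef
  have hL : 0 < L := by positivity
  -- sign constancy on the interval
  have hdich : (∀ x ∈ Ioo t (t + L), ∀ i, 0 < Real.cos (a i * x)) ∨
      (∀ x ∈ Ioo t (t + L), ∀ i, Real.cos (a i * x) < 0) := by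
    rcases Nat.eq_zero_or_pos n with hn | hn
    · left; intro x hx i; exact absurd i.2 (by omega)
    · set i₀ : Fin n := ⟨0, hn⟩ with hi₀
      by_cases hp : ∀ x ∈ Ioo t (t + L), 0 < Real.cos (a i₀ * x)
      · left; intro x hx i
        rcases hsign x hx with h | h
        · exact h i
        · exact absurd (hp x hx) (not_lt.2 (h i₀).le)
      · push_neg at hp
        obtain ⟨x₀, hx₀, hx₀c⟩ := hp
        have hneg0 : ∀ i, Real.cos (a i * x₀) < 0 := by
          rcases hsign x₀ hx₀ with h | h
          · exact absurd (h i₀) (not_lt.2 hx₀c)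
          · exact h
        right; intro x hx
        rcases hsign x hx with h | h
        · exfalso
          have hc : ContinuousOn (fun y => Real.cos ((a i₀ : ℝ) * y)) (uIcc x₀ x) :=
            (Real.continuous_cos.comp (continuous_const.mul continuous_id)).continuousOn
          have h0 : (0:ℝ) ∈ uIcc (Real.cos ((a i₀ : ℝ) * x₀)) (Real.cos ((a i₀ : ℝ) * x)) := by
            rw [Set.mem_uIcc]
            exact Or.inl ⟨(hneg0 i₀).le, (h i₀).le⟩
          obtain ⟨z, hz, hz0⟩ := intermediate_value_uIcc hc h0
          have hzI : z ∈ Ioo t (t + L) :=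
            (Set.ordConnected_Ioo.uIcc_subset hx₀ hx) hz
          simp only [] at hz0
          rcases hsign z hzI with h' | h'
          · exact absurd (h' i₀) (by simp [hz0])
          · exact absurd (h' i₀) (by simp [hz0])
        · exact h
  set Tgt : Set ℝ := {x : ℝ | x ∈ Ioo t (t + L) ∧
      (((∀ i, 0 < Real.cos (a i * x)) ∧ 0 < Real.cos (b * x)) ∨
        ((∀ i, Real.cos (a i * x) < 0) ∧ Real.cos (b * x) < 0))} with hTgt
  have hTgtFin : volume Tgt ≠ ⊤ := by
    refine ((measure_mono (fun x hx => hx.1)).trans_lt ?_).ne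
    rw [Real.volume_Ioo]
    exact ENNReal.ofReal_lt_top
  have hbound : L / 2 - π / (b : ℝ) ≤ (volume Tgt).toReal := by
    rcases hdich with hall | hall
    · have hsub : {x : ℝ | x ∈ Ioo t (t + L) ∧ 0 < Real.cos ((b : ℝ) * x + 0)} ⊆ Tgt := by
        rintro x ⟨hx, hcx⟩
        rw [add_zero] at hcx
        exact ⟨hx, Or.inl ⟨hall x hx, hcx⟩⟩
      have hkey := key (b : ℝ) hbR 0 t (t + L) (by linarith)
      have : (t + L - t) / 2 - π / (b : ℝ) = L / 2 - π / (b : ℝ) := by ring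
      rw [this] at hkey
      exact hkey.trans (ENNReal.toReal_mono hTgtFin (measure_mono hsub))
    · have hsub : {x : ℝ | x ∈ Ioo t (t + L) ∧ 0 < Real.cos ((b : ℝ) * x + π)} ⊆ Tgt := by
        rintro x ⟨hx, hcx⟩
        rw [Real.cos_add_pi] at hcx
        exact ⟨hx, Or.inr ⟨hall x hx, by linarith⟩⟩
      have hkey := key (b : ℝ) hbR π t (t + L) (by linarith)
      have : (t + L - t) / 2 - π / (b : ℝ) = L / 2 - π / (b : ℝ) := by ring
      rw [this] at hkey
      exact hkey.trans (ENNReal.toReal_mono hTgtFin (measure_mono hsub))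
  have hLb : (L / 2 - π / (b : ℝ)) / L = 1 / 2 - 2 * (ℓ : ℝ) / b := by
    rw [hLdef]; field_simp
  calc (1:ℝ) / 2 - 2 * (ℓ : ℝ) / b = (L / 2 - π / (b : ℝ)) / L := hLb.symm
    _ ≤ (volume Tgt).toReal / L := by gcongr
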